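/- arXiv:1904.08371 — 2 statements merged into one kernel-verified Lean document; each statement's English description precedes it below -/
import Mathlib

section
/- Let k be a field of characteristic p > 0, n ≥ 1, A = k[[u₁,…,uₙ]], and let G be a finite p-group of k-algebra automorphisms of A. Then A contains a regular system of parameters that is admissible with respect to the G-action. -/
/-!
STATEMENT 2.  Let `k` be a field of characteristic `p > 0`, `n ≥ 1`, `A = k[[u₁,…,uₙ]]`,
and let `G` be a finite `p`-group of `k`-algebra automorphisms of `A`.  Then `A` contains
a regular system of parameters that is admissible with respect to the `G`-action.

`A` is modeled as `MvPowerSeries (Fin n) k`.  A regular system of parameters is a family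
`v : Fin n → A` spanning the maximal ideal, and it is admissible if every family
`σ₁(v₁),…,σₙ(vₙ)` with `σᵢ ∈ G` again spans the maximal ideal.
-/

open Finsupp MvPowerSeries

noncomputable section

namespace Stmt2

variable {k : Type} [Field k] {n : ℕ}

/-- the `i`-th cofactor in the decomposition `f = f(0) + ∑ X i * g i` -/
def gpart (f : MvPowerSeries (Fin n) k) (i : Fin n) : MvPowerSeries (Fin n) k :=
  fun d => if ∀ j < i, d j = 0 then f (d + Finsupp.single i 1) else 0

theorem coeff_gpart (f : MvPowerSeries (Fin n) k) (i : Fin n) (d : Fin n →₀ ℕ) :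
    MvPowerSeries.coeff (R := k) d (gpart f i)
      = if ∀ j < i, d j = 0 then MvPowerSeries.coeff (R := k) (d + Finsupp.single i 1) f else 0 := rfl

theorem decomposition (f : MvPowerSeries (Fin n) k) :
    f = MvPowerSeries.C (σ := Fin n) (R := k) (MvPowerSeries.constantCoeff (σ := Fin n) (R := k) f)
      + ∑ i, MvPowerSeries.X i * gpart f i := by
  ext d
  rw [map_add, map_sum, MvPowerSeries.coeff_C]
  have hterm : ∀ i : Fin n, MvPowerSeries.coeff (R := k) d (MvPowerSeries.X i * gpart f i)
      = if 1 ≤ d i ∧ ∀ j < i, d j = 0 then MvPowerSeries.coeff (R := k) d f else 0 := by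
    intro i
    rw [MvPowerSeries.X_def, MvPowerSeries.coeff_monomial_mul, coeff_gpart]
    by_cases h1 : Finsupp.single i 1 ≤ d
    · have h1' : 1 ≤ d i := by simpa using (Finsupp.single_le_iff).mp h1
      rw [if_pos h1]
      have hsub : ∀ j : Fin n, j ≠ i → ((d - Finsupp.single i 1 : Fin n →₀ ℕ)) j = d j := by
        intro j hj
        rw [Finsupp.tsub_apply, Finsupp.single_eq_of_ne' hj.symm, Nat.sub_zero]
      by_cases h2 : ∀ j < i, d j = 0
      · rw [if_pos, if_pos ⟨h1', h2⟩, tsub_add_cancel_of_le h1, one_mul]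
        intro j hj
        rw [hsub j hj.ne, h2 j hj]
      · rw [if_neg, if_neg, mul_zero]
        · rintro ⟨-, h2'⟩; exact h2 h2'
        · intro h2'
          apply h2
          intro j hj
          rw [← hsub j hj.ne]
          exact h2' j hj
    · rw [if_neg h1, if_neg]
      rintro ⟨h1', -⟩
      exact h1 (Finsupp.single_le_iff.mpr h1')
  rw [Finset.sum_congr rfl fun i _ => hterm i]
  by_cases hd : d = 0
  · subst hd
    simp
  · rw [if_neg hd]
    have hsupp : d.support.Nonempty := by
      rw [Finsupp.support_nonempty_iff]; exact hd
    set i₀ := d.support.min' hsupp with hi₀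
    have hmem : i₀ ∈ d.support := d.support.min'_mem hsupp
    have hcond : 1 ≤ d i₀ ∧ ∀ j < i₀, d j = 0 := by
      constructor
      · exact Nat.one_le_iff_ne_zero.mpr (Finsupp.mem_support_iff.mp hmem)
      · intro j hj
        by_contra hne
        exact absurd (d.support.min'_le j (Finsupp.mem_support_iff.mpr hne)) (not_le.mpr hj)
    rw [Finset.sum_eq_single i₀, if_pos hcond, zero_add]
    · intro b _ hb
      rw [if_neg]
      rintro ⟨hb1, hb2⟩
      rcases lt_or_gt_of_ne hb with h | h
      · exact absurd (d.support.min'_le b (Finsupp.mem_support_iff.mpr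
          (Nat.one_le_iff_ne_zero.mp hb1))) (not_le.mpr h)
      · exact Nat.one_le_iff_ne_zero.mp hcond.1 (hb2 i₀ h)
    · intro h; exact absurd (Finset.mem_univ i₀) h
theorem mem_max_iff (f : MvPowerSeries (Fin n) k) :
    f ∈ IsLocalRing.maximalIdeal (MvPowerSeries (Fin n) k) ↔
      MvPowerSeries.constantCoeff (σ := Fin n) (R := k) f = 0 := by
  rw [IsLocalRing.mem_maximalIdeal, mem_nonunits_iff, MvPowerSeries.isUnit_iff_constantCoeff,
    isUnit_iff_ne_zero, not_ne_iff]

theorem eq_zero_or_eq_zero_of_add_eq_single {a b : Fin n →₀ ℕ} {j : Fin n}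
    (h : a + b = Finsupp.single j 1) : a = 0 ∨ b = 0 := by
  have hs : ∀ s, a s + b s = Finsupp.single j 1 s := fun s => by
    rw [← Finsupp.add_apply, h]
  rcases Nat.eq_zero_or_pos (a j) with h0 | h1
  · left; ext s
    simp only [Finsupp.coe_zero, Pi.zero_apply]
    rcases eq_or_ne s j with rfl | hs'
    · exact h0
    · have := hs s; rw [Finsupp.single_eq_of_ne' (Ne.symm hs')] at this; omega
  · right; ext s
    simp only [Finsupp.coe_zero, Pi.zero_apply]
    have hj := hs j; rw [Finsupp.single_eq_same] at hj
    rcases eq_or_ne s j with rfl | hs'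
    · omega
    · have := hs s; rw [Finsupp.single_eq_of_ne' (Ne.symm hs')] at this; omega

theorem linear_coeff_eq_zero_of_mem_sq {f : MvPowerSeries (Fin n) k}
    (hf : f ∈ IsLocalRing.maximalIdeal (MvPowerSeries (Fin n) k) *
      IsLocalRing.maximalIdeal (MvPowerSeries (Fin n) k)) (j : Fin n) :
    MvPowerSeries.coeff (R := k) (Finsupp.single j 1) f = 0 := by
  classical
  refine Submodule.mul_induction_on hf ?_ ?_
  · intro x hx y hy
    rw [MvPowerSeries.coeff_mul]
    apply Finset.sum_eq_zero
    intro p hp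
    rcases eq_zero_or_eq_zero_of_add_eq_single (Finset.HasAntidiagonal.mem_antidiagonal.mp hp) with h | h
    · rw [h, MvPowerSeries.coeff_zero_eq_constantCoeff_apply, (mem_max_iff x).mp hx, zero_mul]
    · rw [h, MvPowerSeries.coeff_zero_eq_constantCoeff_apply, (mem_max_iff y).mp hy, mul_zero]
  · intro x y hx hy
    rw [map_add, hx, hy, add_zero]

theorem span_X_eq :
    Ideal.span (Set.range (MvPowerSeries.X : Fin n → MvPowerSeries (Fin n) k)) =
      IsLocalRing.maximalIdeal (MvPowerSeries (Fin n) k) := by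
  apply le_antisymm
  · rw [Ideal.span_le]
    rintro _ ⟨i, rfl⟩
    rw [SetLike.mem_coe, mem_max_iff]
    exact MvPowerSeries.constantCoeff_X i
  · intro f hf
    rw [mem_max_iff] at hf
    have hd := decomposition f
    rw [hf, map_zero, zero_add] at hd
    rw [hd]
    exact Ideal.sum_mem _ fun i _ =>
      Ideal.mul_mem_right _ _ (Ideal.subset_span ⟨i, rfl⟩)

theorem gpart_mem_max {f : MvPowerSeries (Fin n) k}
    (h1 : ∀ j, MvPowerSeries.coeff (R := k) (Finsupp.single j 1) f = 0) (i : Fin n) :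
    gpart f i ∈ IsLocalRing.maximalIdeal (MvPowerSeries (Fin n) k) := by
  rw [mem_max_iff, ← MvPowerSeries.coeff_zero_eq_constantCoeff_apply, coeff_gpart]
  simpa using h1 i

theorem mem_sq_of {f : MvPowerSeries (Fin n) k}
    (h0 : MvPowerSeries.constantCoeff (σ := Fin n) (R := k) f = 0)
    (h1 : ∀ j, MvPowerSeries.coeff (R := k) (Finsupp.single j 1) f = 0) :
    f ∈ IsLocalRing.maximalIdeal (MvPowerSeries (Fin n) k) *
      IsLocalRing.maximalIdeal (MvPowerSeries (Fin n) k) := by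
  have hd := decomposition f
  rw [h0, map_zero, zero_add] at hd
  rw [hd]
  apply Ideal.sum_mem
  intro i _
  exact Ideal.mul_mem_mul ((mem_max_iff _).mpr (MvPowerSeries.constantCoeff_X i))
    (gpart_mem_max h1 i)

/-- linear part of a power series -/
def Lin : MvPowerSeries (Fin n) k →ₗ[k] (Fin n → k) where
  toFun f := fun j => MvPowerSeries.coeff (R := k) (Finsupp.single j 1) f
  map_add' f g := by funext j; simp
  map_smul' c f := by funext j; simp

theorem Lin_apply (f : MvPowerSeries (Fin n) k) (j : Fin n) :
    Lin f j = MvPowerSeries.coeff (R := k) (Finsupp.single j 1) f := rfl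

theorem Lin_C (c : k) : Lin (MvPowerSeries.C (σ := Fin n) (R := k) c) = 0 := by
  funext j
  rw [Lin_apply]
  classical
  rw [MvPowerSeries.coeff_C, if_neg (by simp)]
  rfl

theorem Lin_sum_X (v : Fin n → k) :
    Lin (∑ j, v j • (MvPowerSeries.X j : MvPowerSeries (Fin n) k)) = v := by
  classical
  funext j'
  rw [Lin_apply, map_sum]
  simp only [map_smul, smul_eq_mul, MvPowerSeries.coeff_index_single_X]
  rw [Finset.sum_eq_single j']
  · simp
  · intro b _ hb
    rw [if_neg (fun h => hb h.symm), mul_zero]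
  · intro h; exact absurd (Finset.mem_univ j') h


theorem residual_mem_sq (f : MvPowerSeries (Fin n) k) :
    f - MvPowerSeries.C (σ := Fin n) (R := k) (MvPowerSeries.constantCoeff (σ := Fin n) (R := k) f)
      - ∑ j, Lin f j • MvPowerSeries.X j ∈
    IsLocalRing.maximalIdeal (MvPowerSeries (Fin n) k) *
      IsLocalRing.maximalIdeal (MvPowerSeries (Fin n) k) := by
  classical
  apply mem_sq_of
  · rw [map_sub, map_sub, MvPowerSeries.constantCoeff_C, sub_self, zero_sub, map_sum, neg_eq_zero]
    apply Finset.sum_eq_zero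
    intro j _
    rw [← MvPowerSeries.coeff_zero_eq_constantCoeff_apply, map_smul, smul_eq_mul,
      MvPowerSeries.coeff_zero_X, mul_zero]
  · intro j
    rw [map_sub, map_sub]
    have h1 : MvPowerSeries.coeff (R := k) (Finsupp.single j 1)
        (MvPowerSeries.C (σ := Fin n) (R := k) (MvPowerSeries.constantCoeff (σ := Fin n) (R := k) f)) = 0 := by
      have := Lin_C (n := n) (MvPowerSeries.constantCoeff (σ := Fin n) (R := k) f)
      exact congrFun this j
    have h2 : MvPowerSeries.coeff (R := k) (Finsupp.single j 1)
        (∑ j', Lin f j' • (MvPowerSeries.X j' : MvPowerSeries (Fin n) k)) = Lin f j := by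
      have := Lin_sum_X (Lin f)
      exact congrFun this j
    rw [h1, h2, Lin_apply, sub_zero, sub_self]

theorem map_mem_max (σ : MvPowerSeries (Fin n) k ≃ₐ[k] MvPowerSeries (Fin n) k)
    {f : MvPowerSeries (Fin n) k}
    (hf : f ∈ IsLocalRing.maximalIdeal (MvPowerSeries (Fin n) k)) :
    σ f ∈ IsLocalRing.maximalIdeal (MvPowerSeries (Fin n) k) := by
  rw [IsLocalRing.mem_maximalIdeal, mem_nonunits_iff] at hf ⊢
  intro h
  apply hf
  have := h.map σ.symm.toAlgHom
  simpa using this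

theorem map_mem_sq (σ : MvPowerSeries (Fin n) k ≃ₐ[k] MvPowerSeries (Fin n) k)
    {f : MvPowerSeries (Fin n) k}
    (hf : f ∈ IsLocalRing.maximalIdeal (MvPowerSeries (Fin n) k) *
      IsLocalRing.maximalIdeal (MvPowerSeries (Fin n) k)) :
    σ f ∈ IsLocalRing.maximalIdeal (MvPowerSeries (Fin n) k) *
      IsLocalRing.maximalIdeal (MvPowerSeries (Fin n) k) := by
  refine Submodule.mul_induction_on hf ?_ ?_
  · intro x hx y hy
    rw [map_mul]
    exact Ideal.mul_mem_mul (map_mem_max σ hx) (map_mem_max σ hy)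
  · intro x y hx hy
    rw [map_add]
    exact add_mem hx hy

theorem map_C (σ : MvPowerSeries (Fin n) k ≃ₐ[k] MvPowerSeries (Fin n) k) (c : k) :
    σ (MvPowerSeries.C (σ := Fin n) (R := k) c) = MvPowerSeries.C (σ := Fin n) (R := k) c := by
  rw [MvPowerSeries.c_eq_algebraMap]
  exact σ.commutes c

theorem Lin_map (σ : MvPowerSeries (Fin n) k ≃ₐ[k] MvPowerSeries (Fin n) k)
    (f : MvPowerSeries (Fin n) k) :
    Lin (σ f) = ∑ j, Lin f j • Lin (σ (MvPowerSeries.X j)) := by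
  have key : σ f = σ (MvPowerSeries.C (σ := Fin n) (R := k) (MvPowerSeries.constantCoeff (σ := Fin n) (R := k) f))
      + σ (∑ j, Lin f j • MvPowerSeries.X j)
      + σ (f - MvPowerSeries.C (σ := Fin n) (R := k) (MvPowerSeries.constantCoeff (σ := Fin n) (R := k) f)
        - ∑ j, Lin f j • MvPowerSeries.X j) := by
    rw [← map_add, ← map_add]
    congr 1
    ring
  rw [key, map_add, map_add, map_C, Lin_C, zero_add]
  have h2 : Lin (σ (∑ j, Lin f j • MvPowerSeries.X j))
      = ∑ j, Lin f j • Lin (σ (MvPowerSeries.X j)) := by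
    rw [map_sum, map_sum]
    apply Finset.sum_congr rfl
    intro j _
    rw [map_smul, map_smul]
  have h3 : Lin (σ (f - MvPowerSeries.C (σ := Fin n) (R := k) (MvPowerSeries.constantCoeff (σ := Fin n) (R := k) f)
      - ∑ j, Lin f j • MvPowerSeries.X j)) = 0 := by
    funext j
    rw [Lin_apply]
    exact linear_coeff_eq_zero_of_mem_sq (map_mem_sq σ (residual_mem_sq f)) j
  rw [h2, h3, add_zero]

/-- the induced linear action on the "cotangent" coordinates -/
def rho (σ : MvPowerSeries (Fin n) k ≃ₐ[k] MvPowerSeries (Fin n) k) :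
    Module.End k (Fin n → k) where
  toFun v := ∑ j, v j • Lin (σ (MvPowerSeries.X j))
  map_add' v w := by simp [add_smul, Finset.sum_add_distrib]
  map_smul' c v := by simp [smul_smul, Finset.smul_sum]

theorem rho_Lin (σ : MvPowerSeries (Fin n) k ≃ₐ[k] MvPowerSeries (Fin n) k)
    (f : MvPowerSeries (Fin n) k) : rho σ (Lin f) = Lin (σ f) := (Lin_map σ f).symm

theorem rho_apply (σ : MvPowerSeries (Fin n) k ≃ₐ[k] MvPowerSeries (Fin n) k)
    (v : Fin n → k) : rho σ v = Lin (σ (∑ j, v j • MvPowerSeries.X j)) := by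
  rw [← rho_Lin, Lin_sum_X]

theorem rho_one : rho (1 : MvPowerSeries (Fin n) k ≃ₐ[k] MvPowerSeries (Fin n) k) = 1 := by
  apply LinearMap.ext
  intro v
  rw [rho_apply, AlgEquiv.one_apply, Lin_sum_X]
  rfl

theorem rho_mul (σ τ : MvPowerSeries (Fin n) k ≃ₐ[k] MvPowerSeries (Fin n) k) :
    rho (σ * τ) = rho σ * rho τ := by
  apply LinearMap.ext
  intro v
  rw [rho_apply (σ * τ), AlgEquiv.mul_apply, ← rho_Lin σ, ← rho_apply τ]
  rfl

theorem fixed_vector {p : ℕ} (hp : p.Prime) (k : Type) [Field k] [CharP k p]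
    (V : Type) [AddCommGroup V] [Module k V] [Nontrivial V]
    (G : Type) [Group G] [Finite G] (hG : IsPGroup p G)
    (ρ : G →* Module.End k V) :
    ∃ w : V, w ≠ 0 ∧ ∀ σ : G, ρ σ w = w := by
  classical
  haveI := Fact.mk hp
  letI : Algebra (ZMod p) k := ZMod.algebra k p
  letI : Module (ZMod p) V := Module.compHom V (algebraMap (ZMod p) k)
  haveI : IsScalarTower (ZMod p) k V := by
    constructor
    intro a c x
    show ((algebraMap (ZMod p) k a) • c) • x = (algebraMap (ZMod p) k a) • (c • x)
    rw [smul_eq_mul, mul_smul]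
  obtain ⟨v, hv⟩ := exists_ne (0 : V)
  set O : Set V := Set.range (fun σ : G => ρ σ v) with hO
  have hOfin : O.Finite := Set.finite_range _
  set W : Submodule (ZMod p) V := Submodule.span (ZMod p) O with hW
  haveI : FiniteDimensional (ZMod p) W := FiniteDimensional.span_of_finite (ZMod p) hOfin
  haveI : Finite W := Module.finite_of_finite (ZMod p)
  have hvW : v ∈ W := Submodule.subset_span ⟨1, by simp⟩
  haveI : Nontrivial W := ⟨⟨⟨v, hvW⟩, 0, by simpa using hv⟩⟩
  -- stability of W
  have hstab : ∀ (σ : G), ∀ x ∈ W, ρ σ x ∈ W := by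
    intro σ x hx
    have : Submodule.map ((ρ σ).restrictScalars (ZMod p)) W ≤ W := by
      rw [hW, Submodule.map_span, Submodule.span_le]
      rintro _ ⟨_, ⟨τ, rfl⟩, rfl⟩
      apply Submodule.subset_span
      exact ⟨σ * τ, by simp [map_mul]⟩
    exact this ⟨x, hx, rfl⟩
  letI : MulAction G W :=
    { smul := fun σ x => ⟨ρ σ x, hstab σ x x.2⟩
      one_smul := fun x => Subtype.ext (by show ρ 1 x.1 = x.1; rw [map_one]; rfl)
      mul_smul := fun σ τ x => Subtype.ext
        (by show ρ (σ * τ) x.1 = ρ σ (ρ τ x.1); rw [map_mul]; rfl) }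
  have hsmul : ∀ (σ : G) (x : W), ((σ • x : W) : V) = ρ σ x.1 := fun _ _ => rfl
  -- counting
  have hcard : (p : ℕ) ∣ Nat.card W := by
    haveI : Fintype W := Fintype.ofFinite W
    rw [Nat.card_eq_fintype_card, Module.card_eq_pow_finrank (K := ZMod p) (V := W), ZMod.card]
    exact dvd_pow_self p (Module.finrank_pos (R := ZMod p) (M := W)).ne'
  have hfix := hG.card_modEq_card_fixedPoints W
  have hfixdvd : (p : ℕ) ∣ Nat.card (MulAction.fixedPoints G W) :=
    (Nat.modEq_zero_iff_dvd.mp ((hfix.symm.trans (Nat.modEq_zero_iff_dvd.mpr hcard))))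
  have hzero : (0 : W) ∈ MulAction.fixedPoints G W := by
    intro σ
    exact Subtype.ext (by show ρ σ (0 : V) = 0; rw [map_zero])
  haveI : Finite (MulAction.fixedPoints G W) := Subtype.finite
  have hpos : 0 < Nat.card (MulAction.fixedPoints G W) :=
    Nat.card_pos_iff.mpr ⟨⟨⟨0, hzero⟩⟩, inferInstance⟩
  have h2 : 1 < Nat.card (MulAction.fixedPoints G W) :=
    lt_of_lt_of_le hp.one_lt (Nat.le_of_dvd hpos hfixdvd)
  haveI : Nontrivial (MulAction.fixedPoints G W) := Finite.one_lt_card_iff_nontrivial.mp h2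
  obtain ⟨y, hy⟩ := exists_ne (⟨0, hzero⟩ : MulAction.fixedPoints G W)
  refine ⟨(y.1 : V), ?_, ?_⟩
  · intro h
    apply hy
    ext
    exact h
  · intro σ
    have := y.2 σ
    have := congrArg (Subtype.val) this
    rw [hsmul] at this
    exact this


theorem flag {p : ℕ} (hp : p.Prime) (k : Type) [Field k] [CharP k p]
    (G : Type) [Group G] [Finite G] (hG : IsPGroup p G) (m : ℕ) :
    ∀ (V : Type) [AddCommGroup V] [Module k V] [FiniteDimensional k V],
      Module.finrank k V = m → ∀ (ρ : G →* Module.End k V),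
      ∃ w : Fin m → V, Submodule.span k (Set.range w) = ⊤ ∧
        ∀ (σ : G) (i : Fin m), ρ σ (w i) - w i ∈ Submodule.span k (w '' {j | j < i}) := by
  induction m with
  | zero =>
    intro V _ _ _ hV ρ
    haveI : Subsingleton V := Module.finrank_zero_iff.mp hV
    refine ⟨fun i => i.elim0, Subsingleton.elim _ _, fun σ i => i.elim0⟩
  | succ m ih =>
    intro V _ _ _ hV ρ
    haveI : Nontrivial V :=
      Module.nontrivial_of_finrank_pos (R := k) (hV ▸ Nat.succ_pos m)
    obtain ⟨w₀, hw₀, hfix⟩ := fixed_vector hp k V G hG ρ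
    set S : Submodule k V := Submodule.span k {w₀} with hS
    have hSrank : Module.finrank k S = 1 := finrank_span_singleton hw₀
    have hQrank : Module.finrank k (V ⧸ S) = m := by
      have := Submodule.finrank_quotient_add_finrank S
      omega
    have hle : ∀ σ : G, S ≤ S.comap (ρ σ) := by
      intro σ
      rw [hS, Submodule.span_le]
      rintro x hx
      rw [Set.mem_singleton_iff] at hx
      subst hx
      rw [SetLike.mem_coe, Submodule.mem_comap, hfix σ]
      exact Submodule.subset_span rfl
    set ρ' : G →* Module.End k (V ⧸ S) :=
      { toFun := fun σ => Submodule.mapQ S S (ρ σ) (hle σ)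
        map_one' := by
          apply Submodule.linearMap_qext
          ext x
          simp [Submodule.mapQ_apply]
        map_mul' := fun σ τ => by
          apply Submodule.linearMap_qext
          ext x
          simp [Submodule.mapQ_apply, map_mul, Module.End.mul_apply] } with hρ'
    obtain ⟨w', hw'span, hw'tri⟩ := ih (V ⧸ S) hQrank ρ'
    choose u hu using fun i => Submodule.Quotient.mk_surjective S (w' i)
    set w : Fin (m + 1) → V := Fin.cases w₀ u with hwdef
    have hw0 : w 0 = w₀ := rfl
    have hwsucc : ∀ i : Fin m, w i.succ = u i := fun i => by
      rw [hwdef]; exact Fin.cases_succ i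
    have hmkQsucc : ∀ i : Fin m, S.mkQ (w i.succ) = w' i := fun i => by
      rw [Submodule.mkQ_apply, hwsucc, hu]
    have hSle : S ≤ Submodule.span k (Set.range w) := by
      rw [hS, Submodule.span_le]
      rintro x hx
      rw [Set.mem_singleton_iff] at hx
      subst hx
      exact Submodule.subset_span ⟨0, rfl⟩
    have htop : Submodule.map S.mkQ (Submodule.span k (Set.range w)) = ⊤ := by
      rw [Submodule.map_span, eq_top_iff, ← hw'span]
      apply Submodule.span_mono
      rintro _ ⟨i, rfl⟩
      exact ⟨w i.succ, ⟨i.succ, rfl⟩, hmkQsucc i⟩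
    have hspan : Submodule.span k (Set.range w) = ⊤ := by
      have h2 := (Submodule.map_mkQ_eq_top S _).mp htop
      rwa [sup_eq_right.mpr hSle] at h2
    refine ⟨w, hspan, ?_⟩
    intro σ i
    refine Fin.cases ?_ ?_ i
    · rw [hw0, hfix σ, sub_self]
      exact Submodule.zero_mem _
    · intro i
      set U : Submodule k V := Submodule.span k (w '' {j | j < i.succ}) with hU
      have hSU : S ≤ U := by
        rw [hS, Submodule.span_le]
        rintro x hx
        rw [Set.mem_singleton_iff] at hx
        subst hx
        exact Submodule.subset_span ⟨0, i.succ_pos, rfl⟩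
      have hx : S.mkQ (ρ σ (w i.succ) - w i.succ) ∈ Submodule.map S.mkQ U := by
        have h1 : S.mkQ (ρ σ (w i.succ) - w i.succ) = ρ' σ (w' i) - w' i := by
          rw [map_sub, hmkQsucc i]
          congr 1
          rw [hρ']
          show S.mkQ (ρ σ (w i.succ)) = Submodule.mapQ S S (ρ σ) (hle σ) (w' i)
          rw [← hmkQsucc i, Submodule.mkQ_apply, Submodule.mkQ_apply, Submodule.mapQ_apply]
        rw [h1]
        have h2 : Submodule.span k (w' '' {j | j < i}) ≤ Submodule.map S.mkQ U := by
          rw [Submodule.span_le]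
          rintro _ ⟨j, hj, rfl⟩
          exact ⟨w j.succ,
            Submodule.subset_span ⟨j.succ, Fin.succ_lt_succ_iff.mpr hj, rfl⟩, hmkQsucc j⟩
        exact h2 (hw'tri σ i)
      have hmem : ρ σ (w i.succ) - w i.succ ∈ S ⊔ U := by
        rw [← Submodule.comap_map_mkQ S U]
        exact hx
      rwa [sup_eq_right.mpr hSU] at hmem


theorem span_eq_max_of (u : Fin n → MvPowerSeries (Fin n) k)
    (h0 : ∀ i, MvPowerSeries.constantCoeff (σ := Fin n) (R := k) (u i) = 0)
    (hspan : Submodule.span k (Set.range (fun i => (Lin (u i) : Fin n → k))) = ⊤) :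
    Ideal.span (Set.range u) = IsLocalRing.maximalIdeal (MvPowerSeries (Fin n) k) := by
  apply le_antisymm
  · rw [Ideal.span_le]
    rintro _ ⟨i, rfl⟩
    rw [SetLike.mem_coe, mem_max_iff]
    exact h0 i
  · have hFG : (IsLocalRing.maximalIdeal (MvPowerSeries (Fin n) k)).FG := by
      rw [← span_X_eq]
      exact Submodule.fg_span (Set.finite_range _)
    apply Submodule.le_of_le_smul_of_le_jacobson_bot hFG
    · rw [IsLocalRing.jacobson_eq_maximalIdeal (⊥ : Ideal (MvPowerSeries (Fin n) k)) bot_ne_top]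
    · intro f hf
      have hLf : Lin f ∈ Submodule.span k (Set.range (fun i => (Lin (u i) : Fin n → k))) := by
        rw [hspan]; trivial
      obtain ⟨c, hc⟩ := (Submodule.mem_span_range_iff_exists_fun k).mp hLf
      set f' : MvPowerSeries (Fin n) k := ∑ i, c i • u i with hf'
      have hf'mem : f' ∈ Ideal.span (Set.range u) := by
        apply Submodule.sum_mem
        intro i _
        exact Submodule.smul_of_tower_mem _ (c i) (Ideal.subset_span ⟨i, rfl⟩)
      have hr : f - f' ∈ IsLocalRing.maximalIdeal (MvPowerSeries (Fin n) k) *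
          IsLocalRing.maximalIdeal (MvPowerSeries (Fin n) k) := by
        apply mem_sq_of
        · rw [map_sub, (mem_max_iff f).mp hf, hf', map_sum, zero_sub, neg_eq_zero]
          apply Finset.sum_eq_zero
          intro i _
          rw [← MvPowerSeries.coeff_zero_eq_constantCoeff_apply, map_smul, smul_eq_mul,
            MvPowerSeries.coeff_zero_eq_constantCoeff_apply, h0 i, mul_zero]
        · intro j
          have hcj := congrFun hc j
          rw [map_sub, ← Lin_apply, ← Lin_apply, hf', map_sum]
          simp only [map_smul]
          rw [hcj, sub_self]
      have : f = f' + (f - f') := by ring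
      rw [this]
      apply Submodule.add_mem_sup hf'mem
      rwa [Ideal.smul_eq_mul]


end Stmt2

end

theorem stmt_2 (k : Type) [Field k] (p : ℕ) (hp : p.Prime) [CharP k p]
    (n : ℕ) (hn : 1 ≤ n)
    (G : Subgroup (MvPowerSeries (Fin n) k ≃ₐ[k] MvPowerSeries (Fin n) k))
    [Finite G] (hG : IsPGroup p G) :
    ∃ v : Fin n → MvPowerSeries (Fin n) k,
      Ideal.span (Set.range v) = IsLocalRing.maximalIdeal (MvPowerSeries (Fin n) k) ∧
      ∀ σ : Fin n → G,
        Ideal.span (Set.range (fun i =>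
          (σ i : MvPowerSeries (Fin n) k ≃ₐ[k] MvPowerSeries (Fin n) k) (v i))) =
        IsLocalRing.maximalIdeal (MvPowerSeries (Fin n) k) := by
  classical
  let ρG : G →* Module.End k (Fin n → k) :=
    { toFun := fun σ => Stmt2.rho (σ : MvPowerSeries (Fin n) k ≃ₐ[k] MvPowerSeries (Fin n) k)
      map_one' := by
        show Stmt2.rho (((1 : G) : MvPowerSeries (Fin n) k ≃ₐ[k] MvPowerSeries (Fin n) k)) = 1
        rw [OneMemClass.coe_one, Stmt2.rho_one]
      map_mul' := fun σ τ => by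
        show Stmt2.rho (((σ * τ : G) : MvPowerSeries (Fin n) k ≃ₐ[k] MvPowerSeries (Fin n) k))
          = _
        rw [MulMemClass.coe_mul, Stmt2.rho_mul] }
  have hrank : Module.finrank k (Fin n → k) = n := by simp
  obtain ⟨w, hwspan, hwtri⟩ := Stmt2.flag hp k G hG n (Fin n → k) hrank ρG
  set v : Fin n → MvPowerSeries (Fin n) k :=
    fun i => ∑ j, w i j • MvPowerSeries.X j with hvdef
  have hv0 : ∀ i, MvPowerSeries.constantCoeff (σ := Fin n) (R := k) (v i) = 0 := by
    intro i
    rw [hvdef, ← MvPowerSeries.coeff_zero_eq_constantCoeff_apply, map_sum]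
    apply Finset.sum_eq_zero
    intro j _
    rw [map_smul, smul_eq_mul, MvPowerSeries.coeff_zero_X, mul_zero]
  have hLin : ∀ i, Stmt2.Lin (v i) = w i := fun i => Stmt2.Lin_sum_X (w i)
  have claim : ∀ σ : Fin n → G,
      Ideal.span (Set.range (fun i =>
        (σ i : MvPowerSeries (Fin n) k ≃ₐ[k] MvPowerSeries (Fin n) k) (v i))) =
      IsLocalRing.maximalIdeal (MvPowerSeries (Fin n) k) := by
    intro σ
    apply Stmt2.span_eq_max_of
    · intro i
      exact (Stmt2.mem_max_iff _).mp
        (Stmt2.map_mem_max _ ((Stmt2.mem_max_iff _).mpr (hv0 i)))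
    · set L : Fin n → (Fin n → k) := fun i =>
        Stmt2.Lin ((σ i : MvPowerSeries (Fin n) k ≃ₐ[k] MvPowerSeries (Fin n) k) (v i)) with hL
      have hLrho : ∀ i, L i = ρG (σ i) (w i) := by
        intro i
        show L i = Stmt2.rho _ (w i)
        rw [hL, ← hLin i, Stmt2.rho_Lin]
      have hwmem : ∀ (N : ℕ) (i : Fin n), i.val < N →
          w i ∈ Submodule.span k (Set.range L) := by
        intro N
        induction N with
        | zero => intro i h; omega
        | succ N ih =>
          intro i hi
          have hd := hwtri (σ i) i
          have hsub : Submodule.span k (w '' {j | j < i}) ≤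
              Submodule.span k (Set.range L) := by
            rw [Submodule.span_le]
            rintro _ ⟨j, hj, rfl⟩
            have hj' : j.val < i.val := hj
            exact ih j (by omega)
          have hrw : w i = L i - (ρG (σ i) (w i) - w i) := by
            rw [hLrho i]; ring
          rw [hrw]
          exact Submodule.sub_mem _ (Submodule.subset_span ⟨i, rfl⟩) (hsub hd)
      rw [eq_top_iff, ← hwspan, Submodule.span_le]
      rintro _ ⟨i, rfl⟩
      exact hwmem n i i.isLt
  refine ⟨v, ?_, claim⟩
  have := claim (fun _ => 1)
  simpa only [OneMemClass.coe_one, AlgEquiv.one_apply] using this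
end

section
/- Let k be a field of characteristic p > 0, A = k[[u]] the formal power series ring in one variable, and σ a k-algebra automorphism of A of order p. Let m ≥ 1 be the ramification break of σ, i.e. the largest integer such that σ induces the identity on A/m_A^{m+1} (equivalently, m + 1 is the order of vanishing of σ(u) − u for any uniformizer u of A). Then p divides m + 1 if and only if there exist a uniformizer t of A and an element a ∈ A fixed by σ such that σ(t) = t + a. -/
/-!
STATEMENT 7.  Let `k` be a field of characteristic `p > 0`, `A = k[[u]]` the formal
power series ring in one variable, and `σ` a `k`-algebra automorphism of `A` of order
`p`.  Let `m ≥ 1` be the ramification break of `σ`, i.e. the largest integer such that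
`σ` induces the identity on `A/m_A^{m+1}`.  Then `p` divides `m + 1` if and only if
there exist a uniformizer `t` of `A` and an element `a ∈ A` fixed by `σ` such that
`σ(t) = t + a`.

Modeling: `A := PowerSeries k`.  The ramification break is characterized by:
`σ a − a ∈ m_A^{m+1}` for all `a`, but not `σ a − a ∈ m_A^{m+2}` for all `a`.
A uniformizer is a generator of the maximal ideal.
-/

set_option autoImplicit false
set_option maxHeartbeats 1000000
open PowerSeries Finset

namespace Stmt7Aux

variable {k : Type} [Field k]

local notation "A" => PowerSeries k
local notation "MI" => IsLocalRing.maximalIdeal (PowerSeries k)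

lemma order_ge_iff {f : A} {n : ℕ} : (n : ℕ∞) ≤ order f ↔ (X : A) ^ n ∣ f := by
  rw [X_pow_dvd_iff]
  constructor
  · intro h i hi
    exact coeff_of_lt_order i (lt_of_lt_of_le (by exact_mod_cast hi) h)
  · intro h
    exact nat_le_order f n h

lemma mem_maxpow_iff {f : A} {n : ℕ} : f ∈ MI ^ n ↔ (n : ℕ∞) ≤ order f := by
  rw [PowerSeries.maximalIdeal_eq_span_X, Ideal.span_singleton_pow,
    Ideal.mem_span_singleton, order_ge_iff]

lemma eq_zero_of_forall_mem_pow {f : A} (h : ∀ n : ℕ, f ∈ MI ^ n) : f = 0 := by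
  by_contra hf
  obtain ⟨n, hn⟩ : ∃ n : ℕ, order f = n := by
    have := order_finite_iff_ne_zero.mpr hf
    cases ho : order f with
    | top => simp [ho] at this
    | coe n => exact ⟨n, rfl⟩
  have := mem_maxpow_iff.mp (h (n+1))
  rw [hn] at this
  exact_mod_cast (by exact_mod_cast this : n+1 ≤ n).not_gt (Nat.lt_succ_self n)

lemma exists_factor {f : A} (n : ℕ) (h : order f = n) :
    ∃ w : A, IsUnit w ∧ f = X ^ n * w := by
  obtain ⟨w, hw⟩ := order_ge_iff.mp h.ge
  refine ⟨w, ?_, hw⟩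
  rw [isUnit_iff_constantCoeff]
  have hc : coeff n f ≠ 0 := (order_eq_nat.mp h).1
  rw [hw] at hc
  have : coeff (0 + n) ((X : A) ^ n * w) = coeff 0 w := coeff_X_pow_mul w n 0
  simp only [zero_add] at this
  rw [this] at hc
  simpa using hc

lemma span_order {f : A} (n : ℕ) (h : order f = n) : Ideal.span {f} = MI ^ n := by
  obtain ⟨w, hw, rfl⟩ := exists_factor n h
  rw [PowerSeries.maximalIdeal_eq_span_X, Ideal.span_singleton_pow,
    Ideal.span_singleton_mul_right_unit hw]

lemma dvd_of_order_le {T w : A} (hT : T ≠ 0) (h : order T ≤ order w) : T ∣ w := by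
  rcases eq_or_ne w 0 with rfl | hw
  · exact dvd_zero T
  obtain ⟨nT, hnT⟩ : ∃ n : ℕ, order T = n := by
    have := order_finite_iff_ne_zero.mpr hT
    cases ho : order T with
    | top => simp [ho] at this
    | coe n => exact ⟨n, rfl⟩
  obtain ⟨nw, hnw⟩ : ∃ n : ℕ, order w = n := by
    have := order_finite_iff_ne_zero.mpr hw
    cases ho : order w with
    | top => simp [ho] at this
    | coe n => exact ⟨n, rfl⟩
  obtain ⟨u, hu, hTu⟩ := exists_factor nT hnT
  obtain ⟨v, hv, hwv⟩ := exists_factor nw hnw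
  have hle : nT ≤ nw := by rw [hnT, hnw] at h; exact_mod_cast h
  refine ⟨(↑hu.unit⁻¹ : A) * X ^ (nw - nT) * v, ?_⟩
  have h1 : ((X : A) ^ nT) * X ^ (nw - nT) = X ^ nw := by
    rw [← pow_add, Nat.add_sub_cancel' hle]
  have h2 : u * (↑hu.unit⁻¹ : A) = 1 := IsUnit.mul_val_inv hu
  rw [hwv, hTu]
  calc (X : A) ^ nw * v = X ^ nT * (u * (↑hu.unit⁻¹ : A)) * X ^ (nw - nT) * v := by
        rw [h2, mul_one, h1]
    _ = X ^ nT * u * ((↑hu.unit⁻¹ : A) * X ^ (nw - nT) * v) := by ring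

lemma order_map (τ : A ≃ₐ[k] A) (f : A) : order (τ f) = order f := by
  have hXd : ∀ (τ : A ≃ₐ[k] A) (g : A) (n : ℕ), (X : A) ^ n ∣ g → (X : A) ^ n ∣ τ g := by
    rintro τ g n ⟨c, rfl⟩
    rw [map_mul, map_pow]
    have hX : (X : A) ∣ τ X := by
      rw [X_dvd_iff]
      by_contra hc
      have : IsUnit (τ X) := isUnit_iff_constantCoeff.mpr (isUnit_iff_ne_zero.mpr hc)
      have : IsUnit (X : A) := by
        have := this.map τ.symm.toAlgHom
        simpa using this
      rw [isUnit_iff_constantCoeff] at this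
      simp at this
    exact Dvd.dvd.mul_right (pow_dvd_pow_of_dvd hX n) (τ c)
  have key : ∀ n : ℕ, (n : ℕ∞) ≤ order (τ f) ↔ (n : ℕ∞) ≤ order f := by
    intro n
    rw [order_ge_iff, order_ge_iff]
    constructor
    · intro h
      have := hXd τ.symm _ n h
      simpa using this
    · exact hXd τ f n
  refine le_antisymm ?_ ?_
  · cases ho : order f with
    | top => exact le_top
    | coe n =>
      by_contra hc
      rw [not_le] at hc
      have h1 : ((n+1 : ℕ) : ℕ∞) ≤ order (τ f) := by
        exact_mod_cast Order.add_one_le_of_lt hc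
      have := (key (n+1)).mp h1
      rw [ho] at this
      exact_mod_cast (by exact_mod_cast this : n+1 ≤ n).not_gt (Nat.lt_succ_self n)
  · cases ho : order (τ f) with
    | top => exact le_top
    | coe n =>
      by_contra hc
      rw [not_le] at hc
      have h1 : ((n+1 : ℕ) : ℕ∞) ≤ order f := by
        exact_mod_cast Order.add_one_le_of_lt hc
      have := (key (n+1)).mpr h1
      rw [ho] at this
      exact_mod_cast (by exact_mod_cast this : n+1 ≤ n).not_gt (Nat.lt_succ_self n)


variable (σ : PowerSeries k ≃ₐ[k] PowerSeries k)

lemma sigma_mem_M {t : A} (ht : t ∈ MI) : σ t ∈ MI := by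
  rw [IsLocalRing.mem_maximalIdeal, mem_nonunits_iff] at ht ⊢
  intro hc
  exact ht (by simpa using hc.map σ.symm.toAlgHom)

lemma key_dvd {t : A} (ht : Ideal.span {t} = MI) (f : A) :
    (σ t - t) ∣ (σ f - f) := by
  have approx : ∀ n : ℕ, ∀ f : A, σ f - f ∈ Ideal.span {σ t - t} + MI ^ n := by
    intro n
    induction n with
    | zero =>
      intro f
      refine Submodule.mem_sup_right ?_
      simp
    | succ n IH =>
      intro f
      have hmem : f - C (constantCoeff f) ∈ Ideal.span {t} := by
        rw [ht, ← ker_coeff_eq_max_ideal, RingHom.mem_ker]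
        simp
      obtain ⟨g, hg⟩ := Ideal.mem_span_singleton.mp hmem
      have hf : f = C (constantCoeff f) + t * g := by rw [← hg]; ring
      have hC : σ (C (constantCoeff f)) = C (constantCoeff f) := by
        rw [C_eq_algebraMap]; exact σ.commutes _
      have expand : σ f - f = σ t * (σ g - g) + (σ t - t) * g := by
        conv_lhs => rw [hf]
        rw [map_add, map_mul, hC]
        ring
      rw [expand]
      refine Submodule.add_mem _ ?_ (Submodule.mem_sup_left ?_)
      · obtain ⟨i, hi, w, hw, hiw⟩ := Submodule.mem_sup.mp (IH g)
        rw [← hiw, mul_add]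
        refine Submodule.add_mem _ (Submodule.mem_sup_left (Ideal.mul_mem_left _ _ hi))
          (Submodule.mem_sup_right ?_)
        have hσt : σ t ∈ MI := sigma_mem_M σ (ht ▸ Ideal.mem_span_singleton_self t)
        have := Ideal.mul_mem_mul hσt hw
        rwa [← pow_succ'] at this
      · exact Ideal.mem_span_singleton.mpr (dvd_mul_right _ _)
  rcases eq_or_ne (σ t - t) 0 with h0 | h0
  · rw [h0]
    have : σ f - f = 0 := by
      apply eq_zero_of_forall_mem_pow
      intro n
      have h3 := approx n f
      rw [h0, show Ideal.span ({(0:A)} : Set (PowerSeries k)) = ⊥ by simp,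
        Submodule.add_eq_sup, bot_sup_eq] at h3
      exact h3
    rw [this]
  obtain ⟨c, hc⟩ : ∃ n : ℕ, order (σ t - t) = n := by
    have := order_finite_iff_ne_zero.mpr h0
    cases ho : order (σ t - t) with
    | top => simp [ho] at this
    | coe n => exact ⟨n, rfl⟩
  have hspan : Ideal.span {σ t - t} = MI ^ c := span_order c hc
  have := approx c f
  rw [hspan, Submodule.add_eq_sup, sup_idem] at this
  rw [← Ideal.mem_span_singleton, hspan]
  exact this

lemma break_order (m : ℕ)
    (hb1 : ∀ a : A, σ a - a ∈ MI ^ (m+1))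
    (hb2 : ¬ ∀ a : A, σ a - a ∈ MI ^ (m+2))
    {t : A} (ht : Ideal.span {t} = MI) :
    order (σ t - t) = ((m + 1 : ℕ) : ℕ∞) := by
  have hge : ((m+1 : ℕ) : ℕ∞) ≤ order (σ t - t) := mem_maxpow_iff.mp (hb1 t)
  have hub : order (σ t - t) ≤ ((m+1 : ℕ) : ℕ∞) := by
    by_contra h
    rw [not_le] at h
    have h2 : ((m+2 : ℕ) : ℕ∞) ≤ order (σ t - t) := by
      have := Order.add_one_le_of_lt h
      rw [show ((m+2:ℕ) : ℕ∞) = ((m+1:ℕ) : ℕ∞) + 1 by push_cast; ring]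
      exact this
    refine hb2 fun f => ?_
    obtain ⟨q, hq⟩ := key_dvd σ ht f
    rw [hq]
    exact Ideal.mul_mem_right q _ (mem_maxpow_iff.mpr h2)
  exact le_antisymm hub hge

lemma span_X_max : Ideal.span {(X : A)} = MI := PowerSeries.maximalIdeal_eq_span_X.symm


lemma order_nat {f : A} (hf : f ≠ 0) : ∃ n : ℕ, order f = n := by
  have := order_finite_iff_ne_zero.mpr hf
  cases ho : order f with
  | top => simp [ho] at this
  | coe n => exact ⟨n, rfl⟩

lemma X_mem_M : (X : A) ∈ MI := by
  rw [PowerSeries.maximalIdeal_eq_span_X]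
  exact Ideal.mem_span_singleton_self _

lemma sub_decomp (m : ℕ) (hX1 : ((m+1:ℕ) : ℕ∞) ≤ order (σ X - X))
    {f : A} {n : ℕ} (hn : order f = n) :
    ∃ w S R : A, IsUnit w ∧ f = X ^ n * w ∧
      S = C (n : k) * X ^ (n-1) + R ∧
      R ∈ MI ^ (n + m - 1) ∧
      S * (σ X - X) = (σ X) ^ n - X ^ n ∧
      σ f - f = (σ X) ^ n * (σ w - w) + S * (σ X - X) * w ∧
      (σ w - w) ∈ MI ^ (m+1) ∧
      (σ X) ^ n ∈ MI ^ n := by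
  obtain ⟨w, hw, hfw⟩ := exists_factor n hn
  set d : PowerSeries k := σ X - X with hd
  set S : PowerSeries k := ∑ i ∈ range n, (σ X) ^ i * X ^ (n - 1 - i) with hS
  have hdM : d ∈ MI ^ (m+1) := mem_maxpow_iff.mpr hX1
  have hXM : (X : A) ∈ MI := X_mem_M
  have hσXM : σ X ∈ MI := sigma_mem_M σ hXM
  have hgeom : S * d = (σ X) ^ n - X ^ n := geom_sum₂_mul (σ X) X n
  have hgeom' : ∀ i : ℕ, (∑ j ∈ range i, (σ X) ^ j * X ^ (i - 1 - j)) * d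
      = (σ X) ^ i - X ^ i := fun i => geom_sum₂_mul (σ X) X i
  -- R
  set R : PowerSeries k := S - C (n : k) * X ^ (n-1) with hR
  have hsum : S - C (n : k) * X ^ (n-1) = ∑ i ∈ range n, ((σ X) ^ i - X ^ i) * X ^ (n-1-i) := by
    have h1 : (C (n : k) : A) * X ^ (n-1) = ∑ _i ∈ range n, (X:A) ^ (n-1) := by
      rw [Finset.sum_const, Finset.card_range, nsmul_eq_mul, map_natCast]
    rw [h1, hS, ← Finset.sum_sub_distrib]
    apply Finset.sum_congr rfl
    intro i hi
    rw [Finset.mem_range] at hi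
    have : (X:A) ^ (n-1) = X ^ i * X ^ (n-1-i) := by
      rw [← pow_add]
      congr 1
      omega
    rw [this]
    ring
  have hRM : R ∈ MI ^ (n + m - 1) := by
    rw [hR, hsum]
    apply Ideal.sum_mem
    intro i hi
    rw [Finset.mem_range] at hi
    have h1 : (σ X) ^ i - X ^ i ∈ MI ^ (i - 1 + (m+1)) := by
      have hs : (∑ j ∈ range i, (σ X) ^ j * X ^ (i - 1 - j)) ∈ MI ^ (i-1) := by
        apply Ideal.sum_mem
        intro j hj
        rw [Finset.mem_range] at hj
        have := Ideal.mul_mem_mul (Ideal.pow_mem_pow hσXM j) (Ideal.pow_mem_pow hXM (i-1-j))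
        rw [← pow_add] at this
        exact Ideal.pow_le_pow_right (by omega) this
      have h2 := Ideal.mul_mem_mul hs hdM
      rw [← pow_add] at h2
      rw [← hgeom' i]
      exact h2
    have h2 := Ideal.mul_mem_mul h1 (Ideal.pow_mem_pow hXM (n-1-i))
    rw [← pow_add] at h2
    exact Ideal.pow_le_pow_right (by omega) h2
  have hww : σ w - w ∈ MI ^ (m+1) := by
    obtain ⟨q, hq⟩ := key_dvd σ span_X_max w
    rw [hq]
    exact Ideal.mul_mem_right q _ hdM
  have hexp : σ f - f = (σ X) ^ n * (σ w - w) + S * d * w := by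
    rw [hgeom]
    conv_lhs => rw [hfw]
    rw [map_mul, map_pow]
    ring
  exact ⟨w, S, R, hw, hfw, by rw [hR]; ring, hRM, hgeom, hexp, hww, Ideal.pow_mem_pow hσXM n⟩

lemma order_sub_ge (m : ℕ) (hX1 : ((m+1:ℕ) : ℕ∞) ≤ order (σ X - X))
    {f : A} {n : ℕ} (hn : order f = n) :
    ((n + m : ℕ) : ℕ∞) ≤ order (σ f - f) := by
  obtain ⟨w, S, R, hw, hfw, hSR, hRM, hgeom, hexp, hww, hXn⟩ := sub_decomp σ m hX1 hn
  rw [← mem_maxpow_iff, hexp]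
  refine Submodule.add_mem _ ?_ ?_
  · have := Ideal.mul_mem_mul hXn hww
    rw [← pow_add] at this
    exact Ideal.pow_le_pow_right (by omega) this
  · -- S * d * w : S ∈ M^(n-1)
    have hSM : S ∈ MI ^ (n-1) := by
      rw [hSR]
      refine Submodule.add_mem _ ?_ (Ideal.pow_le_pow_right (by omega) hRM)
      exact Ideal.mul_mem_left _ _ (Ideal.pow_mem_pow X_mem_M (n-1))
    have hdM : (σ X - X) ∈ MI ^ (m+1) := mem_maxpow_iff.mpr hX1
    have := Ideal.mul_mem_mul hSM hdM
    rw [← pow_add] at this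
    refine Ideal.mul_mem_right w _ (Ideal.pow_le_pow_right (by omega) this)

lemma order_sub_eq (p : ℕ) (hp : p.Prime) [CharP k p] (m : ℕ) (hm : 1 ≤ m)
    (hX1 : order (σ X - X) = ((m+1:ℕ) : ℕ∞))
    {f : A} {n : ℕ} (hn : order f = n) (hpn : ¬ p ∣ n) :
    order (σ f - f) = ((n + m : ℕ) : ℕ∞) := by
  have hn1 : 1 ≤ n := by
    rcases Nat.eq_zero_or_pos n with h | h
    · exact absurd (h ▸ dvd_zero p) hpn
    · exact h
  obtain ⟨w, S, R, hw, hfw, hSR, hRM, hgeom, hexp, hww, hXn⟩ := sub_decomp σ m hX1.ge hn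
  set d : PowerSeries k := σ X - X with hd
  have hdn : d ≠ 0 := by
    refine order_finite_iff_ne_zero.mp ?_
    rw [hX1]
    exact WithTop.coe_lt_top _
  -- main term and rest
  set main : PowerSeries k := C (n : k) * X ^ (n-1) * d * w with hmain
  set rest : PowerSeries k := (σ X) ^ n * (σ w - w) + R * d * w with hrest
  have hsplit : σ f - f = main + rest := by
    rw [hexp, hSR]
    ring
  have hnk : ((n : k)) ≠ 0 := by
    rw [Ne, CharP.cast_eq_zero_iff k p n]
    exact hpn
  have hCunit : IsUnit (C (n : k)) := by
    rw [isUnit_iff_constantCoeff, constantCoeff_C]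
    exact isUnit_iff_ne_zero.mpr hnk
  have hmain_ord : order main = ((n + m : ℕ) : ℕ∞) := by
    rw [hmain, order_mul, order_mul, order_mul, order_zero_of_unit hCunit,
      order_zero_of_unit hw, order_X_pow, hX1]
    rw [zero_add, add_zero]
    rw [show ((n-1 : ℕ) : ℕ∞) + ((m+1:ℕ) : ℕ∞) = ((n + m : ℕ) : ℕ∞) by
      rw [← Nat.cast_add]; congr 1; omega]
  have hrest_mem : rest ∈ MI ^ (n + m + 1) := by
    refine Submodule.add_mem _ ?_ ?_
    · have := Ideal.mul_mem_mul hXn hww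
      rw [← pow_add] at this
      exact Ideal.pow_le_pow_right (by omega) this
    · have hdM : d ∈ MI ^ (m+1) := mem_maxpow_iff.mpr hX1.ge
      have := Ideal.mul_mem_mul hRM hdM
      rw [← pow_add] at this
      refine Ideal.mul_mem_right w _ (Ideal.pow_le_pow_right (by omega) this)
  have hrest_ord : ((n + m + 1 : ℕ) : ℕ∞) ≤ order rest := mem_maxpow_iff.mp hrest_mem
  have hne : order main ≠ order rest := by
    rw [hmain_ord]
    intro h
    rw [← h] at hrest_ord
    exact_mod_cast (by exact_mod_cast hrest_ord : n+m+1 ≤ n+m).not_gt (by omega)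
  have hle : ((n + m : ℕ) : ℕ∞) ≤ order rest :=
    le_trans (Nat.cast_le.mpr (by omega)) hrest_ord
  rw [hsplit, order_add_of_order_ne main rest hne, hmain_ord, min_eq_left hle]

lemma fixed_imp_p_dvd (p : ℕ) (hp : p.Prime) [CharP k p] (m : ℕ) (hm : 1 ≤ m)
    (hX1 : order (σ X - X) = ((m+1:ℕ) : ℕ∞))
    {f : A} {n : ℕ} (hf : σ f = f) (hn : order f = n) (hf0 : f ≠ 0) : p ∣ n := by
  by_contra hpn
  have := order_sub_eq σ p hp m hm hX1 hn hpn
  rw [hf, sub_self, order_zero] at this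
  have h2 : ((n + m : ℕ) : ℕ∞) ≠ ⊤ := WithTop.coe_ne_top
  exact h2 this.symm


lemma sum_shift (g : ℕ → A) (n : ℕ) (h : g n = g 0) :
    ∑ i ∈ range n, g (i+1) = ∑ i ∈ range n, g i := by
  have h1 := Finset.sum_range_succ' g n
  have h2 := Finset.sum_range_succ g n
  have h3 := h1.symm.trans h2
  rw [h] at h3
  exact add_right_cancel h3

lemma prod_shift (g : ℕ → A) (n : ℕ) (h : g n = g 0) (h0 : g 0 ≠ 0) :
    ∏ i ∈ range n, g (i+1) = ∏ i ∈ range n, g i := by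
  have h1 := Finset.prod_range_succ' g n
  have h2 := Finset.prod_range_succ g n
  have h3 := h1.symm.trans h2
  rw [h] at h3
  exact mul_right_cancel₀ h0 h3

lemma order_prod {ι : Type} (s : Finset ι) (g : ι → A) :
    order (∏ i ∈ s, g i) = ∑ i ∈ s, order (g i) := by
  classical
  induction s using Finset.induction_on with
  | empty => simp
  | insert _ _ h ih => rw [Finset.prod_insert h, Finset.sum_insert h, order_mul, ih]

lemma order_pow_nat {f : A} {c : ℕ} (h : order f = c) (j : ℕ) :
    order (f ^ j) = ((j * c : ℕ) : ℕ∞) := by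
  induction j with
  | zero => simp
  | succ j ih =>
    rw [pow_succ, order_mul, ih, h, ← Nat.cast_add]
    congr 1
    ring

lemma sigma_pow_apply (i : ℕ) (f : A) : σ ((σ ^ i) f) = (σ ^ (i+1)) f := by
  rw [pow_succ']
  rfl

lemma sigma_pow_ord (p : ℕ) (hord : orderOf σ = p) (f : A) : (σ ^ p) f = f := by
  rw [← hord, pow_orderOf_eq_one]
  rfl

lemma xnorm_fix (p : ℕ) (hord : orderOf σ = p) :
    σ (∏ i ∈ range p, (σ ^ i) X) = ∏ i ∈ range p, (σ ^ i) X := by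
  rw [map_prod]
  calc ∏ i ∈ range p, σ ((σ ^ i) X) = ∏ i ∈ range p, (σ ^ (i+1)) X :=
        Finset.prod_congr rfl fun i _ => sigma_pow_apply σ i X
    _ = ∏ i ∈ range p, (σ ^ i) X := by
        refine prod_shift (fun i => (σ ^ i) X) p ?_ ?_
        · show (σ ^ p) X = (σ ^ 0) X
          rw [sigma_pow_ord σ p hord, pow_zero]
          rfl
        · show (σ ^ 0) X ≠ 0
          rw [pow_zero]
          exact X_ne_zero

lemma xnorm_order (p : ℕ) :
    order (∏ i ∈ range p, (σ ^ i) X) = ((p : ℕ) : ℕ∞) := by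
  rw [order_prod]
  have h1 : ∀ i : ℕ, order ((σ ^ i) X) = 1 := fun i => by
    rw [order_map (σ ^ i) X, order_X]
  rw [Finset.sum_congr rfl fun i _ => h1 i, Finset.sum_const, Finset.card_range,
    nsmul_eq_mul, mul_one]

lemma exists_trace_ne (p : ℕ) (hp : p.Prime) (hord : orderOf σ = p) :
    ∃ θ : A, ∑ i ∈ range p, (σ ^ i) θ ≠ 0 := by
  by_contra h
  push_neg at h
  have li := linearIndependent_monoidHom (PowerSeries k) (PowerSeries k)
  set e : Fin p → ((PowerSeries k) →* (PowerSeries k)) :=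
    fun i => MonoidHomClass.toMonoidHom (σ ^ (i : ℕ)) with he
  have hinj : Function.Injective e := by
    intro i j hij
    have h1 : (σ ^ (i : ℕ)) = (σ ^ (j : ℕ)) := by
      apply AlgEquiv.ext
      intro a
      exact DFunLike.congr_fun hij a
    have h2 := pow_injOn_Iio_orderOf (x := σ) (by rw [hord]; exact i.2) (by rw [hord]; exact j.2) h1
    exact Fin.ext h2
  have li2 := li.comp e hinj
  have hzero : ∑ i : Fin p, (fun _ => (1 : PowerSeries k)) i • ((fun f : (PowerSeries k) →* (PowerSeries k) => (f : (PowerSeries k) → (PowerSeries k))) ∘ e) i = 0 := by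
    funext θ
    rw [Finset.sum_apply]
    simp only [Pi.smul_apply, Function.comp_apply, one_smul, Pi.zero_apply]
    calc ∑ i : Fin p, (e i) θ = ∑ i ∈ range p, (σ ^ i) θ :=
          Fin.sum_univ_eq_sum_range (fun i => (σ ^ i) θ) p
      _ = 0 := h θ
  have h0 := Fintype.linearIndependent_iff.mp li2 (fun _ => 1) hzero ⟨0, hp.pos⟩
  exact one_ne_zero h0

lemma exists_zT (p : ℕ) (hp : p.Prime) [CharP k p] (hord : orderOf σ = p) :
    ∃ z T : A, σ z = z + T ∧ σ T = T ∧ T ≠ 0 := by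
  obtain ⟨θ, hθ⟩ := exists_trace_ne σ p hp hord
  set g : ℕ → PowerSeries k := fun i => (σ ^ i) θ with hg
  have hgp : g p = g 0 := by
    rw [hg]
    simp only
    rw [sigma_pow_ord σ p hord, pow_zero]
    rfl
  set T : PowerSeries k := ∑ i ∈ range p, g i with hT
  have hσg : ∀ i, σ (g i) = g (i+1) := fun i => sigma_pow_apply σ i θ
  have hTfix : σ T = T := by
    rw [hT, map_sum]
    calc ∑ i ∈ range p, σ (g i) = ∑ i ∈ range p, g (i+1) :=
          Finset.sum_congr rfl fun i _ => hσg i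
      _ = ∑ i ∈ range p, g i := sum_shift g p hgp
  have hpA : ((p : ℕ) : PowerSeries k) = 0 := by
    have h1 : ((p : ℕ) : k) = 0 := CharP.cast_eq_zero k p
    calc ((p : ℕ) : PowerSeries k) = C ((p : ℕ) : k) := (map_natCast (C (R := k)) p).symm
      _ = 0 := by rw [h1, map_zero]
  set y : PowerSeries k := ∑ i ∈ range p, (i : PowerSeries k) * g i with hy
  have hσy : σ y = y - T := by
    rw [hy, map_sum]
    have e1 : ∀ i : ℕ, σ ((i : PowerSeries k) * g i) = (i : PowerSeries k) * g (i+1) :=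
      fun i => by rw [map_mul, map_natCast, hσg]
    calc ∑ i ∈ range p, σ ((i : PowerSeries k) * g i)
        = ∑ i ∈ range p, (i : PowerSeries k) * g (i+1) :=
          Finset.sum_congr rfl fun i _ => e1 i
      _ = ∑ i ∈ range p, (((i+1 : ℕ) : PowerSeries k) * g (i+1) - g (i+1)) := by
          apply Finset.sum_congr rfl
          intro i _
          push_cast
          ring
      _ = (∑ i ∈ range p, ((i+1 : ℕ) : PowerSeries k) * g (i+1)) - ∑ i ∈ range p, g (i+1) :=
          Finset.sum_sub_distrib _ _
      _ = (∑ i ∈ range p, (i : PowerSeries k) * g i) - ∑ i ∈ range p, g i := by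
          rw [sum_shift (fun i => (i : PowerSeries k) * g i) p
            (by rw [hpA, hgp]; simp), sum_shift g p hgp]
      _ = y - T := by rw [hy, hT]
  refine ⟨-y, T, ?_, hTfix, hθ⟩
  rw [map_neg, hσy]
  ring

lemma reduce (p : ℕ) (hp : p.Prime) [CharP k p] (hord : orderOf σ = p) (m : ℕ) (hm : 1 ≤ m)
    (hpm : p ∣ (m + 1))
    (hX1 : order (σ X - X) = ((m+1:ℕ) : ℕ∞)) :
    ∀ d : ℕ, ∀ z T : A, σ z = z + T → σ T = T → T ≠ 0 →
      order T ≤ order z + (d : ℕ∞) →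
      ∃ (z' T' : A) (n' : ℕ), σ z' = z' + T' ∧ σ T' = T' ∧ T' ≠ 0 ∧
        z' ≠ 0 ∧ order z' = (n' : ℕ∞) ∧ ¬ p ∣ n' := by
  intro d
  induction d with
  | zero =>
    intro z T hσz hTfix hT0 hbound
    have hz0 : z ≠ 0 := by
      rintro rfl
      rw [map_zero] at hσz
      exact hT0 (by linear_combination -hσz)
    obtain ⟨nz, hnz⟩ := order_nat hz0
    have hTz : σ z - z = T := by rw [hσz]; ring
    have hge : ((nz + m : ℕ) : ℕ∞) ≤ order T := by
      rw [← hTz]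
      exact order_sub_ge σ m hX1.ge hnz
    by_cases hpn : p ∣ nz
    · exfalso
      rw [hnz] at hbound
      have : ((nz + m : ℕ) : ℕ∞) ≤ ((nz : ℕ) : ℕ∞) := by
        refine le_trans hge (le_trans hbound ?_)
        simp
      have : nz + m ≤ nz := by exact_mod_cast this
      omega
    · exact ⟨z, T, nz, hσz, hTfix, hT0, hz0, hnz, hpn⟩
  | succ d IH =>
    intro z T hσz hTfix hT0 hbound
    have hz0 : z ≠ 0 := by
      rintro rfl
      rw [map_zero] at hσz
      exact hT0 (by linear_combination -hσz)
    obtain ⟨nz, hnz⟩ := order_nat hz0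
    obtain ⟨nT, hnT⟩ := order_nat hT0
    have hTz : σ z - z = T := by rw [hσz]; ring
    by_cases hpn : p ∣ nz
    · -- subtraction step
      obtain ⟨q, hq⟩ := hpn
      obtain ⟨s, hs⟩ : p ∣ nT := fixed_imp_p_dvd σ p hp m hm hX1 hTfix hnT hT0
      set x : PowerSeries k := ∏ i ∈ range p, (σ ^ i) X with hx
      have hxfix : σ x = x := xnorm_fix σ p hord
      have hxord : order x = ((p : ℕ) : ℕ∞) := xnorm_order σ p
      have hx0 : x ≠ 0 := by
        refine order_finite_iff_ne_zero.mp ?_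
        rw [hxord]
        exact WithTop.coe_lt_top _
      set N : ℕ := s * p + nz with hN
      have hw1 : order (x ^ s * z) = (N : ℕ∞) := by
        rw [order_mul, order_pow_nat hxord s, hnz, ← Nat.cast_add]
      have hw2 : order (x ^ q * T) = (N : ℕ∞) := by
        rw [order_mul, order_pow_nat hxord q, hnT, ← Nat.cast_add, hN]
        congr 1
        rw [hq, hs]
        ring
      obtain ⟨u1, hu1, hfu1⟩ := exists_factor N hw1
      obtain ⟨u2, hu2, hfu2⟩ := exists_factor N hw2
      have hc2 : constantCoeff u2 ≠ 0 := by
        intro hc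
        exact (isUnit_iff_ne_zero.mp (isUnit_iff_constantCoeff.mp hu2)) hc
      set lam : k := constantCoeff u1 / constantCoeff u2 with hlam
      set z' : PowerSeries k := x ^ s * z - C lam * (x ^ q * T) with hz'
      set T' : PowerSeries k := x ^ s * T with hT'
      have hT'0 : T' ≠ 0 := mul_ne_zero (pow_ne_zero s hx0) hT0
      have hT'fix : σ T' = T' := by rw [hT', map_mul, map_pow, hxfix, hTfix]
      have hσz' : σ z' = z' + T' := by
        rw [hz', map_sub, map_mul, map_mul, map_mul, map_pow, map_pow, hxfix, hTfix, hσz]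
        have hCl : σ (C lam) = C lam := by
          rw [C_eq_algebraMap]
          exact σ.commutes lam
        rw [hCl, hT']
        ring
      have hz'mem : z' ∈ MI ^ (N + 1) := by
        have hdecomp : z' = X ^ N * (u1 - C lam * u2) := by
          rw [hz']
          conv_lhs => rw [hfu1, hfu2]
          ring
        have hker : u1 - C lam * u2 ∈ MI := by
          rw [← ker_coeff_eq_max_ideal, RingHom.mem_ker, map_sub, map_mul, constantCoeff_C]
          rw [hlam]
          field_simp
          simp
        rw [hdecomp, pow_succ]
        exact Ideal.mul_mem_mul (Ideal.pow_mem_pow X_mem_M N) hker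
      have hz'ord : ((N + 1 : ℕ) : ℕ∞) ≤ order z' := mem_maxpow_iff.mp hz'mem
      have hbound' : order T' ≤ order z' + (d : ℕ∞) := by
        have hT'ord : order T' = ((s * p + nT : ℕ) : ℕ∞) := by
          rw [hT', order_mul, order_pow_nat hxord s, hnT, ← Nat.cast_add]
        have hnat : nT ≤ nz + (d + 1) := by
          rw [hnz, hnT] at hbound
          exact_mod_cast hbound
        rw [hT'ord]
        calc ((s * p + nT : ℕ) : ℕ∞) ≤ ((N + 1 + d : ℕ) : ℕ∞) := by
              refine Nat.cast_le.mpr ?_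
              omega
          _ = ((N + 1 : ℕ) : ℕ∞) + (d : ℕ∞) := by push_cast; ring
          _ ≤ order z' + (d : ℕ∞) := add_le_add_left hz'ord _
      exact IH z' T' hσz' hT'fix hT'0 hbound'
    · exact ⟨z, T, nz, hσz, hTfix, hT0, hz0, hnz, hpn⟩

end Stmt7Aux

open PowerSeries in
theorem stmt_7 (k : Type) [Field k] (p : ℕ) (hp : p.Prime) [CharP k p]
    (σ : PowerSeries k ≃ₐ[k] PowerSeries k) (hord : orderOf σ = p)
    (m : ℕ) (hm : 1 ≤ m)
    (hbreak :
      (∀ a : PowerSeries k,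
        σ a - a ∈ IsLocalRing.maximalIdeal (PowerSeries k) ^ (m + 1)) ∧
      ¬ (∀ a : PowerSeries k,
        σ a - a ∈ IsLocalRing.maximalIdeal (PowerSeries k) ^ (m + 2))) :
    p ∣ (m + 1) ↔
      ∃ (t a : PowerSeries k),
        Ideal.span {t} = IsLocalRing.maximalIdeal (PowerSeries k) ∧
        σ a = a ∧ σ t = t + a := by
  classical
  obtain ⟨hb1, hb2⟩ := hbreak
  have hX1 : order (σ X - X) = ((m+1:ℕ) : ℕ∞) :=
    Stmt7Aux.break_order σ m hb1 hb2 Stmt7Aux.span_X_max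
  constructor
  · intro hdvd
    obtain ⟨z, T, hσz, hTfix, hT0⟩ := Stmt7Aux.exists_zT σ p hp hord
    obtain ⟨nT0, hnT0⟩ := Stmt7Aux.order_nat hT0
    obtain ⟨z', T', n, hσz', hT'fix, hT'0, hz'0, hnz', hpn⟩ :=
      Stmt7Aux.reduce σ p hp hord m hm hdvd hX1 nT0 z T hσz hTfix hT0
        (by rw [hnT0]; exact le_add_self)
    have hTz' : σ z' - z' = T' := by rw [hσz']; ring
    have hordT' : order T' = ((n + m : ℕ) : ℕ∞) := by
      rw [← hTz']
      exact Stmt7Aux.order_sub_eq σ p hp m hm hX1 hnz' hpn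
    obtain ⟨s, hs⟩ : p ∣ (n + m) :=
      Stmt7Aux.fixed_imp_p_dvd σ p hp m hm hX1 hT'fix hordT' hT'0
    obtain ⟨r, hr⟩ := hdvd
    have hn1 : 1 ≤ n := by
      rcases Nat.eq_zero_or_pos n with h | h
      · exact absurd (h ▸ dvd_zero p) hpn
      · exact h
    have hrs : r ≤ s := by
      have h1 : p * r ≤ p * s := by omega
      exact Nat.le_of_mul_le_mul_left h1 hp.pos
    set x : PowerSeries k := ∏ i ∈ Finset.range p, (σ ^ i) X with hx
    have hxfix : σ x = x := Stmt7Aux.xnorm_fix σ p hord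
    have hxord : order x = ((p:ℕ) : ℕ∞) := Stmt7Aux.xnorm_order σ p
    have hordw : order (x ^ r * z') = ((n + m + 1 : ℕ) : ℕ∞) := by
      rw [order_mul, Stmt7Aux.order_pow_nat hxord r, hnz', ← Nat.cast_add]
      congr 1
      rw [mul_comm r p]
      omega
    have hdl : T' ∣ x ^ r * z' :=
      Stmt7Aux.dvd_of_order_le hT'0
        (by rw [hordT', hordw]; exact Nat.cast_le.mpr (by omega))
    obtain ⟨t, ht⟩ := hdl
    have hσt : σ t = t + x ^ r := by
      have h5 : σ (x ^ r * z') = x ^ r * z' + x ^ r * T' := by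
        rw [map_mul, map_pow, hxfix, hσz']
        ring
      rw [ht, map_mul, hT'fix] at h5
      have h6 : T' * σ t = T' * (t + x ^ r) := by rw [h5]; ring
      exact mul_left_cancel₀ hT'0 h6
    have hordt : order t = 1 := by
      have h7 : order (T' * t) = ((n+m+1:ℕ):ℕ∞) := by rw [← ht, hordw]
      rw [order_mul, hordT'] at h7
      have h8 : ((n+m:ℕ):ℕ∞) + order t = ((n+m:ℕ):ℕ∞) + 1 := by
        rw [h7, ← Nat.cast_add_one]
      exact WithTop.add_left_cancel WithTop.coe_ne_top h8
    have hspan : Ideal.span {t} = IsLocalRing.maximalIdeal (PowerSeries k) := by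
      have h9 := Stmt7Aux.span_order (f := t) 1 (by exact_mod_cast hordt)
      rwa [pow_one] at h9
    exact ⟨t, x ^ r, hspan, by rw [map_pow, hxfix], hσt⟩
  · rintro ⟨t, a, hspan, hafix, hσt⟩
    have hd : σ t - t = a := by rw [hσt]; ring
    have h1 : order a = ((m+1:ℕ):ℕ∞) := by
      rw [← hd]
      exact Stmt7Aux.break_order σ m hb1 hb2 hspan
    have ha0 : a ≠ 0 :=
      order_finite_iff_ne_zero.mp (by rw [h1]; exact WithTop.coe_lt_top _)
    exact Stmt7Aux.fixed_imp_p_dvd σ p hp m hm hX1 hafix h1 ha0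
end
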